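/- For every n ∈ ℕ₀ and all x > 0, the iterated Laguerre derivative satisfies (β^n ρ_0)(x) = ρ_0(x) and (β^n ρ_1)(x) = ρ_1(x) − n ρ_0(x), where β is applied n times. -/

import Mathlib

open MeasureTheory Real Set

/-- The scaled Macdonald function `ρ_ν(x) = ∫₀^∞ t^(ν-1) e^(-t - x/t) dt`. -/
noncomputable def rho (ν : ℝ) (x : ℝ) : ℝ :=
  ∫ t in Ioi (0:ℝ), t ^ (ν - 1) * Real.exp (-t - x / t)

/-- The Laguerre derivative operator `β f = D (x · D f)`. -/
noncomputable def laguerreDeriv (f : ℝ → ℝ) : ℝ → ℝ :=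
  fun x => deriv (fun y : ℝ => y * deriv f y) x

open Filter

theorem rho_cont (s c : ℝ) : ContinuousOn (fun t : ℝ => t ^ s * Real.exp (-t - c / t)) (Ioi 0) := by
  apply ContinuousOn.mul
  · exact fun t ht => (Real.continuousAt_rpow_const t s (Or.inl (ne_of_gt ht))).continuousWithinAt
  · apply ContinuousOn.rexp
    exact (continuousOn_id.neg.sub (continuousOn_const.div continuousOn_id fun t ht => ne_of_gt ht))

theorem rho_tendsto_zero (s c : ℝ) (hc : 0 < c) :
    Tendsto (fun t : ℝ => t ^ s * Real.exp (-t - c / t)) (nhdsWithin 0 (Ioi 0)) (nhds 0) := by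
  have h1 : Tendsto (fun u : ℝ => u ^ (-s) * Real.exp (-c * u)) atTop (nhds 0) :=
    tendsto_rpow_mul_exp_neg_mul_atTop_nhds_zero (-s) c hc
  have h2 : Tendsto (fun t : ℝ => t⁻¹) (nhdsWithin 0 (Ioi 0)) atTop := tendsto_inv_nhdsGT_zero
  have h3 : Tendsto (fun t : ℝ => t ^ s * Real.exp (-c / t)) (nhdsWithin 0 (Ioi 0)) (nhds 0) := by
    apply (h1.comp h2).congr'
    filter_upwards [self_mem_nhdsWithin] with t (ht : t ∈ Ioi 0)
    simp only [Function.comp]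
    rw [Real.inv_rpow (le_of_lt ht), ← Real.rpow_neg (le_of_lt ht), neg_neg,
      div_eq_mul_inv, neg_mul]
  have h4 : Tendsto (fun t : ℝ => Real.exp (-t)) (nhdsWithin 0 (Ioi 0)) (nhds 1) := by
    have : Tendsto (fun t : ℝ => Real.exp (-t)) (nhds 0) (nhds 1) := by
      have := (Real.continuous_exp.comp continuous_neg).tendsto 0
      simpa [Function.comp_def] using this
    exact this.mono_left nhdsWithin_le_nhds
  have := h3.mul h4
  rw [zero_mul] at this
  apply this.congr
  intro t
  rw [mul_assoc, ← Real.exp_add]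
  ring_nf

theorem rho_integrable (s c : ℝ) (hc : 0 < c) :
    IntegrableOn (fun t : ℝ => t ^ s * Real.exp (-t - c / t)) (Ioi 0) := by
  rw [← Ioc_union_Ioi_eq_Ioi (zero_le_one (α := ℝ))]
  apply IntegrableOn.union
  · -- on Ioc 0 1 : bounded
    obtain ⟨k, hsk⟩ : ∃ k : ℕ, -(k:ℝ) ≤ s := by
      obtain ⟨k, hk⟩ := exists_nat_ge (-s)
      exact ⟨k, by linarith⟩
    have meas : AEStronglyMeasurable (fun t : ℝ => t ^ s * Real.exp (-t - c / t))
        (volume.restrict (Ioc 0 1)) :=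
      ((rho_cont s c).mono Ioc_subset_Ioi_self).aestronglyMeasurable measurableSet_Ioc
    have hint : IntegrableOn (fun _ : ℝ => (Nat.factorial k : ℝ) / c ^ k) (Ioc (0:ℝ) 1) :=
      integrableOn_const measure_Ioc_lt_top.ne
    refine hint.mono' meas ?_
    filter_upwards [ae_restrict_mem measurableSet_Ioc] with t ht
    have ht0 : 0 < t := ht.1
    have hts : (0:ℝ) ≤ t ^ s := Real.rpow_nonneg ht0.le s
    rw [Real.norm_eq_abs, abs_of_nonneg (by positivity)]
    have h1 : t ^ s ≤ t ^ (-(k:ℝ)) := Real.rpow_le_rpow_of_exponent_ge ht0 ht.2 hsk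
    have hct : 0 < c / t := div_pos hc ht0
    have h3 : Real.exp (-t - c / t) ≤ (Nat.factorial k : ℝ) * t ^ k / c ^ k := by
      have hpow := Real.pow_div_factorial_le_exp (c/t) hct.le k
      have hpos : 0 < (c / t) ^ k / (Nat.factorial k : ℝ) := by positivity
      calc Real.exp (-t - c / t) ≤ Real.exp (-(c / t)) := by
            apply Real.exp_le_exp.2; linarith
        _ = (Real.exp (c / t))⁻¹ := Real.exp_neg _
        _ ≤ ((c / t) ^ k / (Nat.factorial k : ℝ))⁻¹ := by
            apply inv_anti₀ hpos hpow
        _ = (Nat.factorial k : ℝ) * t ^ k / c ^ k := by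
            rw [div_pow]
            field_simp
    calc t ^ s * Real.exp (-t - c / t) ≤ t ^ (-(k:ℝ)) * ((Nat.factorial k : ℝ) * t ^ k / c ^ k) :=
          mul_le_mul h1 h3 (Real.exp_pos _).le (Real.rpow_nonneg ht0.le _)
      _ = (Nat.factorial k : ℝ) / c ^ k := by
          rw [Real.rpow_neg ht0.le, Real.rpow_natCast]
          field_simp
  · -- on Ioi 1 : exponential decay
    apply integrable_of_isBigO_exp_neg (b := 1/2) one_half_pos
    · exact (rho_cont s c).mono fun t ht => mem_Ioi.2 (lt_of_lt_of_le one_pos ht)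
    · rw [Asymptotics.isBigO_iff]
      refine ⟨1, ?_⟩
      have h := tendsto_rpow_mul_exp_neg_mul_atTop_nhds_zero s (1/2) one_half_pos
      have h2 : ∀ᶠ t : ℝ in atTop, t ^ s * Real.exp (-(1/2) * t) < 1 :=
        h.eventually_lt_const one_pos
      filter_upwards [h2, eventually_ge_atTop (1:ℝ)] with t hlt ht1
      have ht0 : (0:ℝ) < t := lt_of_lt_of_le one_pos ht1
      have hts : (0:ℝ) ≤ t ^ s := Real.rpow_nonneg ht0.le s
      rw [Real.norm_eq_abs, abs_of_nonneg (by positivity), Real.norm_eq_abs,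
        abs_of_nonneg (Real.exp_pos _).le]
      have e1 : Real.exp (-t - c / t) ≤ Real.exp (-(1/2) * t) * Real.exp (-(1/2) * t) := by
        rw [← Real.exp_add]
        apply Real.exp_le_exp.2
        have : 0 ≤ c / t := le_of_lt (div_pos hc ht0)
        linarith
      calc t ^ s * Real.exp (-t - c / t)
          ≤ t ^ s * (Real.exp (-(1/2) * t) * Real.exp (-(1/2) * t)) :=
            mul_le_mul_of_nonneg_left e1 hts
        _ = (t ^ s * Real.exp (-(1/2) * t)) * Real.exp (-(1/2) * t) := by ring
        _ ≤ 1 * Real.exp (-(1/2) * t) := mul_le_mul_of_nonneg_right hlt.le (Real.exp_pos _).le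

theorem rho_meas (s c : ℝ) : AEStronglyMeasurable (fun t : ℝ => t ^ s * Real.exp (-t - c / t))
    (volume.restrict (Ioi 0)) :=
  (rho_cont s c).aestronglyMeasurable measurableSet_Ioi

theorem hasDerivAt_rho (ν x : ℝ) (hx : 0 < x) :
    HasDerivAt (rho ν) (-(rho (ν - 1) x)) x := by
  have hεpos : 0 < x / 2 := by linarith
  have key := hasDerivAt_integral_of_dominated_loc_of_deriv_le
    (μ := volume.restrict (Ioi (0:ℝ)))
    (F := fun y t => t ^ (ν - 1) * Real.exp (-t - y / t))
    (F' := fun y t => -(t ^ (ν - 1 - 1) * Real.exp (-t - y / t)))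
    (x₀ := x) (bound := fun t => t ^ (ν - 1 - 1) * Real.exp (-t - (x/2) / t))
    (Metric.ball_mem_nhds x hεpos)
    (Eventually.of_forall fun y => rho_meas (ν - 1) y)
    (rho_integrable (ν - 1) x hx)
    ((rho_meas (ν - 1 - 1) x).neg)
    ?_ (rho_integrable (ν - 1 - 1) (x/2) hεpos) ?_
  · obtain ⟨-, h⟩ := key
    have : (∫ t in Ioi (0:ℝ), -(t ^ (ν - 1 - 1) * Real.exp (-t - x / t)))
        = -(rho (ν - 1) x) := by
      rw [integral_neg]; rfl
    rw [this] at h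
    exact h
  · -- bound
    filter_upwards [ae_restrict_mem measurableSet_Ioi] with t ht y hy
    have ht0 : 0 < t := ht
    have hy2 : x / 2 ≤ y := by
      rw [Metric.mem_ball, Real.dist_eq, abs_lt] at hy
      linarith
    rw [norm_neg, Real.norm_eq_abs, abs_of_nonneg (by positivity)]
    apply mul_le_mul_of_nonneg_left _ (Real.rpow_nonneg ht0.le _)
    apply Real.exp_le_exp.2
    have : x / 2 / t ≤ y / t := by gcongr
    linarith
  · -- differentiability
    filter_upwards [ae_restrict_mem measurableSet_Ioi] with t ht y hy
    have ht0 : (0:ℝ) < t := ht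
    have h1 : HasDerivAt (fun y : ℝ => -t - y / t) (-(1/t)) y := by
      simpa using ((hasDerivAt_id y).div_const t).const_sub (-t)
    have h2 := (h1.exp).const_mul (t ^ (ν - 1))
    refine h2.congr_deriv ?_
    rw [Real.rpow_sub ht0, Real.rpow_one]
    field_simp
    rw [show ν - 1 - 1 = ν - 2 by ring, Real.rpow_sub ht0, Real.rpow_two]
    field_simp

theorem rho_recurrence (μ x : ℝ) (hx : 0 < x) :
    x * rho (μ - 1) x = rho (μ + 1) x - μ * rho μ x := by
  set g : ℝ → ℝ := fun t => if 0 < t then t ^ μ * Real.exp (-t - x / t) else 0 with hg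
  set G : ℝ → ℝ := fun t =>
    (μ * (t ^ (μ - 1) * Real.exp (-t - x / t)) - t ^ (μ + 1 - 1) * Real.exp (-t - x / t))
      + x * (t ^ (μ - 1 - 1) * Real.exp (-t - x / t)) with hG
  have hg0 : g 0 = 0 := by simp [hg]
  have hcont : ContinuousWithinAt g (Ici 0) 0 := by
    unfold ContinuousWithinAt
    rw [hg0, ← Set.Ioi_insert, nhdsWithin_insert, tendsto_sup]
    constructor
    · simpa [hg0] using (tendsto_pure_nhds g 0).congr' (by simp [hg0]) |>.mono_right le_rfl
    · apply (rho_tendsto_zero μ x hx).congr'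
      filter_upwards [self_mem_nhdsWithin] with t (ht : t ∈ Ioi 0)
      simp [hg, ht.out]
  have hderiv : ∀ t ∈ Ioi (0:ℝ), HasDerivAt g (G t) t := by
    intro t ht
    have ht0 : (0:ℝ) < t := ht
    have h1 : HasDerivAt (fun y : ℝ => y ^ μ) (μ * t ^ (μ - 1)) t :=
      Real.hasDerivAt_rpow_const (Or.inl ht0.ne')
    have h2 : HasDerivAt (fun y : ℝ => -y - x / y) (-1 - x * -(t ^ 2)⁻¹) t := by
      have := ((hasDerivAt_inv ht0.ne').const_mul x)
      exact ((hasDerivAt_id' t).neg.sub ((hasDerivAt_const t x).div (hasDerivAt_id' t) ht0.ne')).congr_deriv (by rw [div_eq_mul_inv]; ring)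
    have hf : HasDerivAt (fun y : ℝ => y ^ μ * Real.exp (-y - x / y))
        (μ * t ^ (μ - 1) * Real.exp (-t - x / t)
          + t ^ μ * (Real.exp (-t - x / t) * (-1 - x * -(t ^ 2)⁻¹))) t := h1.mul h2.exp
    have heq : (fun y : ℝ => y ^ μ * Real.exp (-y - x / y)) =ᶠ[nhds t] g := by
      filter_upwards [Ioi_mem_nhds ht0] with y (hy : y ∈ Ioi 0)
      simp [hg, hy.out]
    refine HasDerivAt.congr_of_eventuallyEq ?_ heq.symm
    refine hf.congr_deriv ?_
    have e1 : t ^ (μ - 1 - 1) = t ^ μ / t ^ (2:ℕ) := by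
      rw [show μ - 1 - 1 = μ - (2:ℕ) by push_cast; ring, Real.rpow_sub ht0, Real.rpow_natCast]
    have e2 : t ^ (μ + 1 - 1) = t ^ μ := by norm_num
    simp only [hG, e1, e2]
    field_simp
    ring
  have hG_int : IntegrableOn G (Ioi (0:ℝ)) := by
    apply Integrable.add
    · exact ((rho_integrable (μ - 1) x hx).const_mul μ).sub (rho_integrable (μ + 1 - 1) x hx)
    · exact (rho_integrable (μ - 1 - 1) x hx).const_mul x
  have htop : Tendsto g atTop (nhds 0) := by
    have h := tendsto_rpow_mul_exp_neg_mul_atTop_nhds_zero μ 1 one_pos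
    apply squeeze_zero' ?_ ?_ (by simpa using h)
    · filter_upwards [eventually_gt_atTop (0:ℝ)] with t ht
      simp only [hg, if_pos ht]
      positivity
    · filter_upwards [eventually_gt_atTop (0:ℝ)] with t ht
      simp only [hg, if_pos ht]
      apply mul_le_mul_of_nonneg_left _ (Real.rpow_nonneg ht.le _)
      apply Real.exp_le_exp.2
      have : 0 ≤ x / t := le_of_lt (div_pos hx ht)
      linarith
  have hint := integral_Ioi_of_hasDerivAt_of_tendsto hcont hderiv hG_int htop
  rw [hg0, sub_zero] at hint
  have i1 : IntegrableOn (fun t : ℝ => μ * (t ^ (μ - 1) * Real.exp (-t - x / t))) (Ioi 0) :=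
    (rho_integrable (μ - 1) x hx).const_mul μ
  have i2 : IntegrableOn (fun t : ℝ => t ^ (μ + 1 - 1) * Real.exp (-t - x / t)) (Ioi 0) :=
    rho_integrable (μ + 1 - 1) x hx
  have i3 : IntegrableOn (fun t : ℝ => x * (t ^ (μ - 1 - 1) * Real.exp (-t - x / t))) (Ioi 0) :=
    (rho_integrable (μ - 1 - 1) x hx).const_mul x
  have i12 : IntegrableOn (fun t : ℝ => μ * (t ^ (μ - 1) * Real.exp (-t - x / t))
      - t ^ (μ + 1 - 1) * Real.exp (-t - x / t)) (Ioi 0) := i1.sub i2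
  have hsplit : ∫ t in Ioi (0:ℝ), G t
      = (μ * rho μ x - rho (μ + 1) x) + x * rho (μ - 1) x := by
    simp only [hG]
    rw [integral_add i12 i3, integral_sub i1 i2, MeasureTheory.integral_const_mul, MeasureTheory.integral_const_mul]
    rfl
  rw [hint] at hsplit
  linarith

theorem laguerre_combo (a b x : ℝ) (hx : 0 < x) :
    laguerreDeriv (fun y => a * rho 1 y + b * rho 0 y) x
      = a * (rho 1 x - rho 0 x) + b * rho 0 x := by
  set f := fun y => a * rho 1 y + b * rho 0 y with hf
  have hder : ∀ y : ℝ, 0 < y → deriv f y = -(a * rho 0 y) - b * rho (-1) y := by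
    intro y hy
    have h1 := (hasDerivAt_rho 1 y hy).const_mul a
    have h0 := (hasDerivAt_rho 0 y hy).const_mul b
    have := (h1.add h0).deriv
    rw [hf, show (fun y => a * rho 1 y + b * rho 0 y) = ((fun y => a * rho 1 y) + fun y => b * rho 0 y) from rfl, this]
    norm_num
    ring
  have heq : (fun y => y * deriv f y)
      =ᶠ[nhds x] (fun y => -(a * (y * rho 0 y)) - b * (y * rho (-1) y)) := by
    filter_upwards [Ioi_mem_nhds hx] with y (hy : y ∈ Ioi 0)
    rw [hder y hy.out]; ring
  show deriv (fun y : ℝ => y * deriv f y) x = _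
  rw [heq.deriv_eq]
  have H1 : HasDerivAt (fun y : ℝ => y * rho 0 y) (1 * rho 0 x + x * -(rho (0-1) x)) x :=
    (hasDerivAt_id x).mul (hasDerivAt_rho 0 x hx)
  have H2 : HasDerivAt (fun y : ℝ => y * rho (-1) y) (1 * rho (-1) x + x * -(rho (-1-1) x)) x :=
    (hasDerivAt_id x).mul (hasDerivAt_rho (-1) x hx)
  rw [show (fun y : ℝ => -(a * (y * rho 0 y)) - b * (y * rho (-1) y)) = ((-fun y => a * (y * rho 0 y)) - fun y => b * (y * rho (-1) y)) from rfl, ((H1.const_mul a).neg.sub (H2.const_mul b)).deriv]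
  have r0 := rho_recurrence 0 x hx
  have r1 := rho_recurrence (-1) x hx
  norm_num at r0 r1 ⊢
  linear_combination a * r0 + b * r1

theorem laguerre_congr {f g : ℝ → ℝ} {x : ℝ} (h : f =ᶠ[nhds x] g) :
    laguerreDeriv f x = laguerreDeriv g x := by
  show deriv _ x = deriv _ x
  apply Filter.EventuallyEq.deriv_eq
  filter_upwards [h.deriv] with y hy
  rw [hy]

theorem key (n : ℕ) (a b : ℝ) : ∀ y : ℝ, 0 < y →
    laguerreDeriv^[n] (fun z => a * rho 1 z + b * rho 0 z) y
      = a * rho 1 y + (b - n * a) * rho 0 y := by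
  induction n generalizing b with
  | zero => intro y hy; simp
  | succ n ih =>
    intro y hy
    rw [Function.iterate_succ_apply']
    have h1 : laguerreDeriv^[n] (fun z => a * rho 1 z + b * rho 0 z)
        =ᶠ[nhds y] (fun z => a * rho 1 z + (b - n * a) * rho 0 z) := by
      filter_upwards [Ioi_mem_nhds hy] with z (hz : z ∈ Ioi 0)
      exact ih b z hz.out
    rw [laguerre_congr h1, laguerre_combo a (b - n * a) y hy]
    push_cast; ring

theorem iterated_laguerreDeriv_rho (n : ℕ) (x : ℝ) (hx : 0 < x) :
    (laguerreDeriv^[n] (rho 0)) x = rho 0 x ∧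
      (laguerreDeriv^[n] (rho 1)) x = rho 1 x - n * rho 0 x := by
  constructor
  · have e : (fun z => (0:ℝ) * rho 1 z + 1 * rho 0 z) = rho 0 := by funext z; ring
    have := key n 0 1 x hx
    rw [e] at this
    rw [this]; ring
  · have e : (fun z => (1:ℝ) * rho 1 z + 0 * rho 0 z) = rho 1 := by funext z; ring
    have := key n 1 0 x hx
    rw [e] at this
    rw [this]; ring
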